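/- Let E ∈ M(J, {n_k}, {c_k}) be a Moran set with lim_{k→∞} (log c_k)/(log(c_1⋯c_k)) = 0. Then for every δ ∈ (0,1), h_E(δ) ≥ limsup_{q→∞} max_{1 ≤ p ≤ l_{q,δ}} (log(n_p⋯n_q))/(−log(c_p⋯c_q)), where l_{q,δ} = max{1 ≤ p ≤ q : (log(c_p⋯c_q))/(log(c_1⋯c_q)) > δ}. -/

import Mathlib

open Filter Topology Metric Set

/-- `coverNum X r R` : the smallest number of closed balls of radius `r` needed to cover
`X ∩ B` over all closed balls `B` of radius `R`. -/
noncomputable def coverNum (X : Type*) [MetricSpace X] (r R : ℝ) : ℕ :=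
  sSup {n : ℕ | ∃ x : X, n = sInf {m : ℕ | ∃ s : Finset X,
    s.card = m ∧ Metric.closedBall x R ⊆ ⋃ y ∈ s, Metric.closedBall y r}}

/-- `hFun X δ = inf {α ≥ 0 : ∃ b, c > 0, N_{r,R}(X) ≤ c (R/r)^α for all 0 < r < r^(1-δ) ≤ R < b}`. -/
noncomputable def hFun (X : Type*) [MetricSpace X] (δ : ℝ) : ℝ :=
  sInf {α : ℝ | 0 ≤ α ∧ ∃ b c : ℝ, 0 < b ∧ 0 < c ∧ ∀ r R : ℝ,
    0 < r → r < r ^ (1 - δ) → r ^ (1 - δ) ≤ R → R < b →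
      (coverNum X r R : ℝ) ≤ c * (R / r) ^ α}

/-- The quasi-Assouad dimension `dim_qA X = lim_{δ → 0⁺} h_X(δ)`; since `h_X` is
non-increasing in `δ`, this limit equals the supremum over `δ ∈ (0,1)`. -/
noncomputable def dimqA (X : Type*) [MetricSpace X] : ℝ :=
  sSup (hFun X '' Set.Ioo 0 1)

/-- A word `i₁ ⋯ i_k` (as a list, head = `i₁`) is admissible for the branching numbers `n`
if `1 ≤ i_t ≤ n t` for every `t`. -/
def MoranAdmissible (n : ℕ → ℕ) (w : List ℕ) : Prop :=
  ∀ t : ℕ, t < w.length → 1 ≤ w.getD t 0 ∧ w.getD t 0 ≤ n (t + 1)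

/-- `F ∈ M(J, {n_k}, {c_k})` : `F` is a Moran set with initial closed interval `J`,
branching numbers `n_k` and contraction ratios `c_k` (indices start at `1`). -/
def IsMoranSet (J : Set ℝ) (n : ℕ → ℕ) (c : ℕ → ℝ) (F : Set ℝ) : Prop :=
  ∃ A B : ℝ, A < B ∧ J = Set.Icc A B ∧
  ∃ a b : List ℕ → ℝ,
    a [] = A ∧ b [] = B ∧
    (∀ w : List ℕ, MoranAdmissible n w → ∀ j : ℕ, 1 ≤ j → j ≤ n (w.length + 1) →
      a w ≤ a (w ++ [j]) ∧ a (w ++ [j]) < b (w ++ [j]) ∧ b (w ++ [j]) ≤ b w ∧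
      b (w ++ [j]) - a (w ++ [j]) = c (w.length + 1) * (b w - a w)) ∧
    (∀ w : List ℕ, MoranAdmissible n w → ∀ j j' : ℕ, 1 ≤ j → j ≤ n (w.length + 1) →
      1 ≤ j' → j' ≤ n (w.length + 1) → j ≠ j' →
      interior (Set.Icc (a (w ++ [j])) (b (w ++ [j]))) ∩
        interior (Set.Icc (a (w ++ [j'])) (b (w ++ [j']))) = ∅) ∧
    F = ⋂ k : ℕ, ⋃ w ∈ {w : List ℕ | MoranAdmissible n w ∧ w.length = k},
      Set.Icc (a w) (b w)

/-- `s_{p,q} = log (n_p ⋯ n_q) / (- log (c_p ⋯ c_q))`. -/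
noncomputable def spq (n : ℕ → ℕ) (c : ℕ → ℝ) (p q : ℕ) : ℝ :=
  Real.log (∏ i ∈ Finset.Icc p q, (n i : ℝ)) / (-Real.log (∏ i ∈ Finset.Icc p q, c i))

/-- `l_{q,δ} = max {1 ≤ p ≤ q : log (c_p ⋯ c_q) / log (c_1 ⋯ c_q) > δ}`. -/
noncomputable def lIdx (c : ℕ → ℝ) (δ : ℝ) (q : ℕ) : ℕ :=
  sSup {p : ℕ | 1 ≤ p ∧ p ≤ q ∧
    δ < Real.log (∏ i ∈ Finset.Icc p q, c i) / Real.log (∏ i ∈ Finset.Icc 1 q, c i)}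



lemma adm_append {n : ℕ → ℕ} {w : List ℕ} (hw : MoranAdmissible n w) {j : ℕ}
    (h1 : 1 ≤ j) (h2 : j ≤ n (w.length + 1)) : MoranAdmissible n (w ++ [j]) := by
  intro t ht
  rcases lt_or_ge t w.length with h | h
  · rw [List.getD_append _ _ _ _ h]; exact hw t h
  · have hl : t = w.length := by
      simp [List.length_append] at ht; omega
    subst hl
    rw [List.getD_append_right _ _ _ _ le_rfl]
    simpa using ⟨h1, h2⟩

lemma adm_prefix {n : ℕ → ℕ} {w v : List ℕ} (h : MoranAdmissible n (w ++ v)) :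
    MoranAdmissible n w := by
  intro t ht
  have := h t (by simp [List.length_append]; omega)
  rwa [List.getD_append _ _ _ _ ht] at this

lemma adm_last {n : ℕ → ℕ} {w : List ℕ} {j : ℕ} (h : MoranAdmissible n (w ++ [j])) :
    1 ≤ j ∧ j ≤ n (w.length + 1) := by
  have := h w.length (by simp)
  rwa [List.getD_append_right _ _ _ _ le_rfl, Nat.sub_self] at this

noncomputable def moranLen (c : ℕ → ℝ) (k : ℕ) : ℝ := ∏ i ∈ Finset.Icc 1 k, c i

def SubdivHyp (n : ℕ → ℕ) (c : ℕ → ℝ) (a b : List ℕ → ℝ) : Prop :=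
  ∀ w : List ℕ, MoranAdmissible n w → ∀ j : ℕ, 1 ≤ j → j ≤ n (w.length + 1) →
      a w ≤ a (w ++ [j]) ∧ a (w ++ [j]) < b (w ++ [j]) ∧ b (w ++ [j]) ≤ b w ∧
      b (w ++ [j]) - a (w ++ [j]) = c (w.length + 1) * (b w - a w)

lemma moranLen_succ (c : ℕ → ℝ) (k : ℕ) :
    moranLen c (k + 1) = moranLen c k * c (k + 1) := by
  unfold moranLen
  rw [Finset.prod_Icc_succ_top (by omega)]

lemma len_eq {n : ℕ → ℕ} {c : ℕ → ℝ} {a b : List ℕ → ℝ} {A B : ℝ}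
    (Hs : SubdivHyp n c a b) (hA : a [] = A) (hB : b [] = B) (hAB : A < B) :
    ∀ w : List ℕ, MoranAdmissible n w →
      a w < b w ∧ b w - a w = (B - A) * moranLen c w.length := by
  intro w
  induction w using List.reverseRecOn with
  | nil => intro _; simp [hA, hB, hAB, moranLen]
  | append_singleton v j ih =>
    intro hadm
    have hv := adm_prefix hadm
    have hj := adm_last hadm
    obtain ⟨h1, h2, h3, h4⟩ := Hs v hv j hj.1 hj.2
    obtain ⟨ih1, ih2⟩ := ih hv
    refine ⟨h2, ?_⟩
    rw [h4, ih2, List.length_append, List.length_singleton, moranLen_succ]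
    ring

lemma nest {n : ℕ → ℕ} {c : ℕ → ℝ} {a b : List ℕ → ℝ}
    (Hs : SubdivHyp n c a b) (w : List ℕ) :
    ∀ v : List ℕ, MoranAdmissible n (w ++ v) → a w ≤ a (w ++ v) ∧ b (w ++ v) ≤ b w := by
  intro v
  induction v using List.reverseRecOn with
  | nil => intro _; simp
  | append_singleton v j ih =>
    intro hadm
    rw [← List.append_assoc] at hadm
    have hv := adm_prefix hadm
    have hj := adm_last hadm
    obtain ⟨h1, h2, h3, h4⟩ := Hs (w ++ v) hv j hj.1 hj.2
    obtain ⟨ih1, ih2⟩ := ih hv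
    constructor
    · rw [← List.append_assoc]; exact ih1.trans h1
    · rw [← List.append_assoc]; exact h3.trans ih2

def DisjHyp (n : ℕ → ℕ) (a b : List ℕ → ℝ) : Prop :=
  ∀ w : List ℕ, MoranAdmissible n w → ∀ j j' : ℕ, 1 ≤ j → j ≤ n (w.length + 1) →
      1 ≤ j' → j' ≤ n (w.length + 1) → j ≠ j' →
      interior (Set.Icc (a (w ++ [j])) (b (w ++ [j]))) ∩
        interior (Set.Icc (a (w ++ [j'])) (b (w ++ [j']))) = ∅

lemma order_of_ne {n : ℕ → ℕ} {c : ℕ → ℝ} {a b : List ℕ → ℝ} {A B : ℝ}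
    (Hs : SubdivHyp n c a b) (Hd : DisjHyp n a b)
    (hA : a [] = A) (hB : b [] = B) (hAB : A < B) :
    ∀ (k : ℕ) (w1 w2 : List ℕ), MoranAdmissible n w1 → MoranAdmissible n w2 →
      w1.length = k → w2.length = k → w1 ≠ w2 → b w1 ≤ a w2 ∨ b w2 ≤ a w1 := by
  intro k
  induction k with
  | zero =>
    intro w1 w2 _ _ h1 h2 hne
    exact absurd (by rw [List.length_eq_zero_iff] at h1 h2; rw [h1, h2]) hne
  | succ k ih =>
    intro w1 w2 ha1 ha2 h1 h2 hne
    obtain ⟨v1, j1, rfl⟩ : ∃ v j, w1 = v ++ [j] := by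
      rcases List.eq_nil_or_concat w1 with h | ⟨v, j, h⟩
      · simp [h] at h1
      · exact ⟨v, j, by simpa [List.concat_eq_append] using h⟩
    obtain ⟨v2, j2, rfl⟩ : ∃ v j, w2 = v ++ [j] := by
      rcases List.eq_nil_or_concat w2 with h | ⟨v, j, h⟩
      · simp [h] at h2
      · exact ⟨v, j, by simpa [List.concat_eq_append] using h⟩
    have hv1 := adm_prefix ha1
    have hv2 := adm_prefix ha2
    have hj1 := adm_last ha1
    have hj2 := adm_last ha2
    have hl1 : v1.length = k := by simp at h1; omega
    have hl2 : v2.length = k := by simp at h2; omega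
    by_cases hv : v1 = v2
    · subst hv
      have hj : j1 ≠ j2 := by
        intro h; exact hne (by rw [h])
      have hd := Hd v1 hv1 j1 j2 hj1.1 hj1.2 hj2.1 (hl1 ▸ hl2 ▸ hj2.2) hj
      rw [interior_Icc, interior_Icc] at hd
      have hlt1 := (len_eq Hs hA hB hAB _ ha1).1
      have hlt2 := (len_eq Hs hA hB hAB _ ha2).1
      by_contra hcon
      push_neg at hcon
      obtain ⟨hc1, hc2⟩ := hcon
      set m := max (a (v1 ++ [j1])) (a (v1 ++ [j2]))
      set M := min (b (v1 ++ [j1])) (b (v1 ++ [j2]))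
      have hmM : m < M := by
        simp only [m, M, max_lt_iff, lt_min_iff]
        exact ⟨⟨hlt1, hc1⟩, ⟨hc2, hlt2⟩⟩
      have : (m + M) / 2 ∈ Set.Ioo (a (v1 ++ [j1])) (b (v1 ++ [j1])) ∩
          Set.Ioo (a (v1 ++ [j2])) (b (v1 ++ [j2])) := by
        constructor <;> constructor
        · calc a (v1 ++ [j1]) ≤ m := le_max_left _ _
            _ < (m + M) / 2 := by linarith
        · calc (m + M) / 2 < M := by linarith
            _ ≤ b (v1 ++ [j1]) := min_le_left _ _
        · calc a (v1 ++ [j2]) ≤ m := le_max_right _ _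
            _ < (m + M) / 2 := by linarith
        · calc (m + M) / 2 < M := by linarith
            _ ≤ b (v1 ++ [j2]) := min_le_right _ _
      rw [hd] at this
      exact this
    · have hord := ih v1 v2 hv1 hv2 hl1 hl2 hv
      have hn1 := nest Hs v1 [j1] ha1
      have hn2 := nest Hs v2 [j2] ha2
      rcases hord with h | h
      · exact Or.inl (hn1.2.trans (h.trans hn2.1))
      · exact Or.inr (hn2.2.trans (h.trans hn1.1))

lemma adm_replicate_ext {n : ℕ → ℕ} (hn : ∀ k : ℕ, 1 ≤ k → 2 ≤ n k)
    {w : List ℕ} (hw : MoranAdmissible n w) (m : ℕ) :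
    MoranAdmissible n (w ++ List.replicate m 1) := by
  induction m with
  | zero => simpa using hw
  | succ m ih =>
    rw [List.replicate_succ', ← List.append_assoc]
    exact adm_append ih le_rfl (le_trans (by norm_num) (hn _ (by omega)))

lemma exists_mem_E {n : ℕ → ℕ} {c : ℕ → ℝ} {a b : List ℕ → ℝ} {A B : ℝ} {E : Set ℝ}
    (hn : ∀ k : ℕ, 1 ≤ k → 2 ≤ n k)
    (Hs : SubdivHyp n c a b)
    (hA : a [] = A) (hB : b [] = B) (hAB : A < B)
    (hEeq : E = ⋂ k : ℕ, ⋃ w ∈ {w : List ℕ | MoranAdmissible n w ∧ w.length = k},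
      Set.Icc (a w) (b w))
    (w : List ℕ) (hw : MoranAdmissible n w) :
    ∃ x : ℝ, x ∈ E ∧ x ∈ Set.Icc (a w) (b w) := by
  set g : ℕ → List ℕ := fun m => w ++ List.replicate m 1 with hg
  have hadm : ∀ m, MoranAdmissible n (g m) := fun m => adm_replicate_ext hn hw m
  have hglen : ∀ m, (g m).length = w.length + m := by intro m; simp [hg]
  have hsucc : ∀ m, g (m + 1) = g m ++ [1] := by
    intro m; simp [hg, List.replicate_succ', List.append_assoc]
  have hstep : ∀ m, a (g m) ≤ a (g (m + 1)) := by
    intro m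
    rw [hsucc m]
    exact (Hs (g m) (hadm m) 1 le_rfl (le_trans (by norm_num) (hn _ (by omega)))).1
  have hmono : Monotone (fun m => a (g m)) := monotone_nat_of_le_succ hstep
  have hnest : ∀ m m', m ≤ m' → a (g m) ≤ a (g m') ∧ b (g m') ≤ b (g m) := by
    intro m m' hmm
    have : g m' = g m ++ List.replicate (m' - m) 1 := by
      simp [hg, List.append_assoc, ← List.replicate_add]
      congr 1
      omega
    rw [this]
    exact nest Hs _ _ (this ▸ hadm m')
  have hbdd : BddAbove (Set.range fun m => a (g m)) := by
    refine ⟨b (g 0), ?_⟩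
    rintro x ⟨m, rfl⟩
    exact le_trans (len_eq Hs hA hB hAB _ (hadm m)).1.le (hnest 0 m (by omega)).2
  set x := ⨆ m, a (g m) with hx
  have hxmem : ∀ m, x ∈ Set.Icc (a (g m)) (b (g m)) := by
    intro m
    constructor
    · exact le_ciSup hbdd m
    · refine ciSup_le fun m' => ?_
      rcases le_total m' m with h | h
      · exact le_trans (hmono h) (len_eq Hs hA hB hAB _ (hadm m)).1.le
      · exact le_trans (len_eq Hs hA hB hAB _ (hadm m')).1.le (hnest m m' h).2
  have hg0 : g 0 = w := by simp [hg]
  refine ⟨x, ?_, by rw [← hg0]; exact hxmem 0⟩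
  rw [hEeq]
  refine Set.mem_iInter.2 fun k => ?_
  rcases le_or_gt w.length k with h | h
  · refine Set.mem_biUnion (show g (k - w.length) ∈ _ from ⟨hadm _, by rw [hglen]; omega⟩) ?_
    exact hxmem _
  · refine Set.mem_biUnion (show w.take k ∈ {w : List ℕ | MoranAdmissible n w ∧ w.length = k}
      from ⟨?_, by simp; omega⟩) ?_
    · have : w = w.take k ++ w.drop k := (List.take_append_drop k w).symm
      exact adm_prefix (this ▸ hw)
    · have hsplit : w = w.take k ++ w.drop k := (List.take_append_drop k w).symm
      have := nest Hs (w.take k) (w.drop k) (by rw [List.take_append_drop]; exact hw)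
      rw [List.take_append_drop] at this
      have hx0 := hxmem 0
      rw [hg0] at hx0
      exact ⟨this.1.trans hx0.1, hx0.2.trans this.2⟩

lemma E_subset_Icc {n : ℕ → ℕ} {a b : List ℕ → ℝ} {A B : ℝ} {E : Set ℝ}
    (hA : a [] = A) (hB : b [] = B)
    (hEeq : E = ⋂ k : ℕ, ⋃ w ∈ {w : List ℕ | MoranAdmissible n w ∧ w.length = k},
      Set.Icc (a w) (b w)) :
    E ⊆ Set.Icc A B := by
  intro x hx
  rw [hEeq] at hx
  have := Set.mem_iInter.1 hx 0
  obtain ⟨w, ⟨-, hw0⟩, hxw⟩ := Set.mem_iUnion₂.1 this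
  rw [List.length_eq_zero_iff] at hw0
  subst hw0
  rwa [hA, hB] at hxw

def extFinset (n : ℕ → ℕ) (w : List ℕ) : ℕ → Finset (List ℕ)
  | 0 => {w}
  | m + 1 => (extFinset n w m).biUnion fun u =>
      (Finset.Icc 1 (n (u.length + 1))).image fun j => u ++ [j]

lemma extFinset_spec {n : ℕ → ℕ} {w : List ℕ} (hw : MoranAdmissible n w) :
    ∀ m : ℕ, ∀ u ∈ extFinset n w m,
      (∃ v, u = w ++ v) ∧ u.length = w.length + m ∧ MoranAdmissible n u := by
  intro m
  induction m with
  | zero => intro u hu; simp [extFinset] at hu; subst hu; exact ⟨⟨[], by simp⟩, by simp, hw⟩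
  | succ m ih =>
    intro u hu
    simp only [extFinset, Finset.mem_biUnion, Finset.mem_image, Finset.mem_Icc] at hu
    obtain ⟨u', hu', j, ⟨hj1, hj2⟩, rfl⟩ := hu
    obtain ⟨⟨v, rfl⟩, hlen, hadm⟩ := ih _ hu'
    exact ⟨⟨v ++ [j], by simp⟩, by simp [List.length_append] at hlen ⊢; omega, adm_append hadm hj1 hj2⟩

lemma extFinset_card {n : ℕ → ℕ} {w : List ℕ} (hw : MoranAdmissible n w) :
    ∀ m : ℕ, (extFinset n w m).card = ∏ i ∈ Finset.Icc (w.length + 1) (w.length + m), n i := by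
  intro m
  induction m with
  | zero => simp [extFinset]
  | succ m ih =>
    rw [extFinset, Finset.card_biUnion]
    · have : ∀ u ∈ extFinset n w m,
          ((Finset.Icc 1 (n (u.length + 1))).image fun j => u ++ [j]).card
            = n (w.length + m + 1) := by
        intro u hu
        rw [Finset.card_image_of_injective _ (fun j j' h => by simpa using h),
          Nat.card_Icc, (extFinset_spec hw m u hu).2.1]
        omega
      rw [Finset.sum_congr rfl this, Finset.sum_const, ih, smul_eq_mul,
        ← Nat.add_assoc, Finset.prod_Icc_succ_top (by omega)]
    · intro u1 h1 u2 h2 hne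
      simp only [Finset.disjoint_left, Finset.mem_image, Finset.mem_Icc]
      rintro x ⟨j, -, rfl⟩ ⟨j', -, heq⟩
      have hl : u2.length = u1.length := by
        rw [(extFinset_spec hw m u1 h1).2.1, (extFinset_spec hw m u2 h2).2.1]
      exact hne ((List.append_inj heq.symm hl.symm).1)

lemma card_le_four_of_disjoint_Ioo {T : Finset (List ℕ)} {a b : List ℕ → ℝ} {ℓ y : ℝ}
    (hl : 0 < ℓ)
    (hlen : ∀ u ∈ T, b u - a u = ℓ)
    (hsub : ∀ u ∈ T, Set.Icc (a u) (b u) ⊆ Set.Icc (y - 2 * ℓ) (y + 2 * ℓ))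
    (hdisj : (T : Set (List ℕ)).PairwiseDisjoint (fun u => Set.Ioo (a u) (b u))) :
    T.card ≤ 4 := by
  have h1 : MeasureTheory.volume (⋃ u ∈ T, Set.Ioo (a u) (b u))
      = ∑ u ∈ T, MeasureTheory.volume (Set.Ioo (a u) (b u)) :=
    MeasureTheory.measure_biUnion_finset hdisj (fun u _ => measurableSet_Ioo)
  have h2 : ∑ u ∈ T, MeasureTheory.volume (Set.Ioo (a u) (b u))
      = (T.card : ENNReal) * ENNReal.ofReal ℓ := by
    rw [Finset.sum_congr rfl (fun u hu => by rw [Real.volume_Ioo, hlen u hu]),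
      Finset.sum_const, nsmul_eq_mul]
  have h3 : MeasureTheory.volume (⋃ u ∈ T, Set.Ioo (a u) (b u))
      ≤ MeasureTheory.volume (Set.Icc (y - 2 * ℓ) (y + 2 * ℓ)) := by
    refine MeasureTheory.measure_mono (Set.iUnion₂_subset fun u hu => ?_)
    exact Set.Ioo_subset_Icc_self.trans (hsub u hu)
  rw [h1, h2, Real.volume_Icc] at h3
  have h4 : ENNReal.ofReal (y + 2 * ℓ - (y - 2 * ℓ)) = 4 * ENNReal.ofReal ℓ := by
    rw [show y + 2 * ℓ - (y - 2 * ℓ) = 4 * ℓ by ring, ENNReal.ofReal_mul (by norm_num)]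
    norm_num
  rw [h4] at h3
  have h5 : (T.card : ENNReal) ≤ 4 := by
    have hne : ENNReal.ofReal ℓ ≠ 0 := by
      simp [ENNReal.ofReal_eq_zero]; linarith
    exact (ENNReal.mul_le_mul_iff_left hne ENNReal.ofReal_ne_top).1 h3
  exact_mod_cast h5

lemma exists_cover {A B : ℝ} {E : Set ℝ} (hEsub : E ⊆ Set.Icc A B)
    (x : ↥E) {r : ℝ} (hr : 0 < r) (R : ℝ) :
    ∃ s : Finset ↥E, Metric.closedBall x R ⊆ ⋃ y ∈ s, Metric.closedBall y r ∧
      s.card ≤ ⌈(B - A) / r⌉₊ + 1 := by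
  classical
  set K := ⌈(B - A) / r⌉₊ + 1 with hK
  set y : ℕ → ↥E := fun i =>
    if h : ∃ z : ↥E, (z : ℝ) ∈ Set.Icc (A + i * r) (A + i * r + r) then h.choose else x with hy
  refine ⟨(Finset.range K).image y, ?_, le_trans (Finset.card_image_le) (by simp)⟩
  intro z _
  have hzE : (z : ℝ) ∈ Set.Icc A B := hEsub z.2
  set i := ⌊((z : ℝ) - A) / r⌋₊ with hi
  have hnn : 0 ≤ ((z : ℝ) - A) / r := div_nonneg (by linarith [hzE.1]) hr.le
  have hiK : i < K := by
    have h1 : ((z : ℝ) - A) / r ≤ (B - A) / r :=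
      div_le_div_of_nonneg_right (by linarith [hzE.2]) hr.le
    have h2 : i ≤ ⌈(B - A) / r⌉₊ := le_trans (Nat.floor_le_floor h1) (Nat.floor_le_ceil _)
    omega
  have hcell : (z : ℝ) ∈ Set.Icc (A + i * r) (A + i * r + r) := by
    constructor
    · have := Nat.floor_le hnn
      rw [le_div_iff₀ hr] at this
      linarith
    · have := Nat.lt_floor_add_one (((z : ℝ) - A) / r)
      rw [div_lt_iff₀ hr] at this
      push_cast at this
      linarith
  have hex : ∃ z' : ↥E, (z' : ℝ) ∈ Set.Icc (A + i * r) (A + i * r + r) := ⟨z, hcell⟩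
  refine Set.mem_biUnion (Finset.mem_image_of_mem y (Finset.mem_range.2 hiK)) ?_
  have hyi : ((y i : ℝ)) ∈ Set.Icc (A + i * r) (A + i * r + r) := by
    rw [hy]; simp only [dif_pos hex]; exact hex.choose_spec
  rw [Metric.mem_closedBall, Subtype.dist_eq, Real.dist_eq, abs_le]
  constructor <;> [linarith [hcell.1, hcell.2, hyi.1, hyi.2]; linarith [hcell.1, hcell.2, hyi.1, hyi.2]]


lemma coverNum_le_bound {A B : ℝ} {E : Set ℝ} (hEsub : E ⊆ Set.Icc A B)
    {r : ℝ} (hr : 0 < r) (R : ℝ) :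
    coverNum ↥E r R ≤ ⌈(B - A) / r⌉₊ + 1 := by
  refine csSup_le' ?_
  rintro m ⟨x, rfl⟩
  obtain ⟨s, hcov, hcard⟩ := exists_cover hEsub x hr R
  exact le_trans (Nat.sInf_le ⟨s, rfl, hcov⟩) hcard

lemma le_coverNum {A B : ℝ} {E : Set ℝ} (hEsub : E ⊆ Set.Icc A B)
    {r R : ℝ} (hr : 0 < r) (x : ↥E) (N : ℕ)
    (h : ∀ s : Finset ↥E, Metric.closedBall x R ⊆ ⋃ y ∈ s, Metric.closedBall y r →
      N ≤ s.card) :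
    N ≤ coverNum ↥E r R := by
  have hbdd : BddAbove {n : ℕ | ∃ x : ↥E, n = sInf {m : ℕ | ∃ s : Finset ↥E,
      s.card = m ∧ Metric.closedBall x R ⊆ ⋃ y ∈ s, Metric.closedBall y r}} := by
    refine ⟨⌈(B - A) / r⌉₊ + 1, ?_⟩
    rintro m ⟨x', rfl⟩
    obtain ⟨s, hcov, hcard⟩ := exists_cover hEsub x' hr R
    exact le_trans (Nat.sInf_le ⟨s, rfl, hcov⟩) hcard
  refine le_trans ?_ (le_csSup hbdd ⟨x, rfl⟩)
  obtain ⟨s0, hcov0, -⟩ := exists_cover hEsub x hr R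
  refine le_csInf ⟨s0.card, s0, rfl, hcov0⟩ ?_
  rintro m ⟨s, rfl, hcov⟩
  exact h s hcov

lemma moranLen_pos {c : ℕ → ℝ} (hc : ∀ k : ℕ, 1 ≤ k → 0 < c k) (k : ℕ) :
    0 < moranLen c k :=
  Finset.prod_pos fun i hi => hc i (Finset.mem_Icc.1 hi).1

lemma moran_count {n : ℕ → ℕ} {c : ℕ → ℝ} {a b : List ℕ → ℝ} {A B : ℝ} {E : Set ℝ}
    (hn : ∀ k : ℕ, 1 ≤ k → 2 ≤ n k) (hc : ∀ k : ℕ, 1 ≤ k → 0 < c k)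
    (Hs : SubdivHyp n c a b) (Hd : DisjHyp n a b)
    (hA : a [] = A) (hB : b [] = B) (hAB : A < B)
    (hEeq : E = ⋂ k : ℕ, ⋃ w ∈ {w : List ℕ | MoranAdmissible n w ∧ w.length = k},
      Set.Icc (a w) (b w))
    {P q : ℕ} (hP : 1 ≤ P) (hPq : P ≤ q) {r R : ℝ}
    (hrdef : r = (B - A) * moranLen c q)
    (hR : (B - A) * moranLen c (P - 1) ≤ R) :
    (∏ i ∈ Finset.Icc P q, n i) ≤ 4 * coverNum ↥E r R := by
  classical
  have hEsub : E ⊆ Set.Icc A B := E_subset_Icc hA hB hEeq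
  have hr : 0 < r := by
    rw [hrdef]; exact mul_pos (by linarith) (moranLen_pos hc q)
  -- the base word
  set w : List ℕ := List.replicate (P - 1) 1 with hw
  have hwadm : MoranAdmissible n w := by
    have := adm_replicate_ext hn (show MoranAdmissible n [] from fun t ht => by simp at ht) (P - 1)
    simpa using this
  have hwlen : w.length = P - 1 := by simp [hw]
  -- the center point
  obtain ⟨x0, hx0E, hx0mem⟩ := exists_mem_E hn Hs hA hB hAB hEeq w hwadm
  set x : ↥E := ⟨x0, hx0E⟩ with hx
  -- the collection of level-q words
  set T : Finset (List ℕ) := extFinset n w (q - (P - 1)) with hT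
  have hTspec := extFinset_spec hwadm (q - (P - 1))
  have hTlen : ∀ u ∈ T, u.length = q := by
    intro u hu; rw [(hTspec u hu).2.1, hwlen]; omega
  have hTcard : T.card = ∏ i ∈ Finset.Icc P q, n i := by
    have e1 : P - 1 + 1 = P := by omega
    have e2 : P - 1 + (q - (P - 1)) = q := by omega
    rw [hT, extFinset_card hwadm, hwlen, e1, e2]
  -- points of E in each level-q interval
  set zfun : List ℕ → ↥E := fun u =>
    if h : ∃ z : ↥E, (z : ℝ) ∈ Set.Icc (a u) (b u) then h.choose else x with hzfun
  have hz : ∀ u ∈ T, (zfun u : ℝ) ∈ Set.Icc (a u) (b u) := by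
    intro u hu
    obtain ⟨z0, hz0E, hz0mem⟩ := exists_mem_E hn Hs hA hB hAB hEeq u (hTspec u hu).2.2
    have hex : ∃ z : ↥E, (z : ℝ) ∈ Set.Icc (a u) (b u) := ⟨⟨z0, hz0E⟩, hz0mem⟩
    rw [hzfun]; simp only [dif_pos hex]; exact hex.choose_spec
  have hzball : ∀ u ∈ T, zfun u ∈ Metric.closedBall x R := by
    intro u hu
    obtain ⟨v, rfl⟩ := (hTspec u hu).1
    have hnst := nest Hs w v (hTspec _ hu).2.2
    have hzu := hz _ hu
    have hlw := len_eq Hs hA hB hAB w hwadm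
    rw [hwlen] at hlw
    rw [Metric.mem_closedBall, Subtype.dist_eq, Real.dist_eq, abs_le]
    have h1 : a w ≤ (zfun (w ++ v) : ℝ) := le_trans hnst.1 hzu.1
    have h2 : ((zfun (w ++ v)) : ℝ) ≤ b w := le_trans hzu.2 hnst.2
    constructor <;> [linarith [hx0mem.1, hx0mem.2, hlw.2]; linarith [hx0mem.1, hx0mem.2, hlw.2]]
  -- main estimate given any cover
  have hmain : ∀ s : Finset ↥E,
      Metric.closedBall x R ⊆ ⋃ y ∈ s, Metric.closedBall y r →
      (∏ i ∈ Finset.Icc P q, n i) ≤ 4 * s.card := by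
    intro s hcov
    set yfun : List ℕ → ↥E := fun u =>
      if h : ∃ y ∈ s, zfun u ∈ Metric.closedBall y r then h.choose else x with hyfun
    have hy : ∀ u ∈ T, yfun u ∈ s ∧ zfun u ∈ Metric.closedBall (yfun u) r := by
      intro u hu
      have := hcov (hzball u hu)
      rw [Set.mem_iUnion₂] at this
      obtain ⟨y, hys, hmem⟩ := this
      have hex : ∃ y ∈ s, zfun u ∈ Metric.closedBall y r := ⟨y, hys, hmem⟩
      rw [hyfun]; simp only [dif_pos hex]
      exact ⟨hex.choose_spec.1, hex.choose_spec.2⟩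
    have hcard4 : T.card ≤ 4 * (T.image yfun).card := by
      refine Finset.card_le_mul_card_image T 4 fun y0 _ => ?_
      set F := T.filter (fun u => yfun u = y0) with hF
      have hFsub : F ⊆ T := Finset.filter_subset _ _
      refine card_le_four_of_disjoint_Ioo (a := a) (b := b) (ℓ := r) (y := (y0 : ℝ)) hr ?_ ?_ ?_
      · intro u hu
        have hu' := hFsub hu
        have := (len_eq Hs hA hB hAB u (hTspec u hu').2.2).2
        rw [hTlen u hu'] at this
        rw [this, hrdef]
      · intro u hu
        have hu' := hFsub hu
        have hzu := hz u hu'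
        have hyu := (hy u hu').2
        have hyeq : yfun u = y0 := (Finset.mem_filter.1 hu).2
        rw [hyeq] at hyu
        rw [Metric.mem_closedBall, Subtype.dist_eq, Real.dist_eq, abs_le] at hyu
        have hlen : b u - a u = r := by
          have := (len_eq Hs hA hB hAB u (hTspec u hu').2.2).2
          rw [hTlen u hu'] at this
          rw [this, hrdef]
        intro t ht
        simp only [Set.mem_Icc] at ht ⊢
        constructor <;> [linarith [ht.1, ht.2, hzu.1, hzu.2, hyu.1, hyu.2]; linarith [ht.1, ht.2, hzu.1, hzu.2, hyu.1, hyu.2]]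
      · intro u1 h1 u2 h2 hne
        have h1' := hFsub (by exact_mod_cast h1)
        have h2' := hFsub (by exact_mod_cast h2)
        have hord := order_of_ne Hs Hd hA hB hAB q u1 u2 (hTspec u1 h1').2.2
          (hTspec u2 h2').2.2 (hTlen u1 h1') (hTlen u2 h2') hne
        rw [Function.onFun, Set.disjoint_left]
        intro t ht1 ht2
        simp only [Set.mem_Ioo] at ht1 ht2
        rcases hord with h | h
        · linarith [ht1.2, ht2.1]
        · linarith [ht2.2, ht1.1]
    have himg : (T.image yfun).card ≤ s.card :=
      Finset.card_le_card fun y hy' => by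
        obtain ⟨u, hu, rfl⟩ := Finset.mem_image.1 hy'
        exact (hy u hu).1
    calc (∏ i ∈ Finset.Icc P q, n i) = T.card := hTcard.symm
      _ ≤ 4 * (T.image yfun).card := hcard4
      _ ≤ 4 * s.card := by omega
  -- conclude via le_coverNum
  set N : ℕ := ((∏ i ∈ Finset.Icc P q, n i) + 3) / 4 with hN
  have := le_coverNum hEsub hr x N fun s hcov => by
    have := hmain s hcov
    omega
  omega

noncomputable def lamSum (c : ℕ → ℝ) (k : ℕ) : ℝ := ∑ i ∈ Finset.Icc 1 k, (-Real.log (c i))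

lemma sum_split (f : ℕ → ℝ) {p q : ℕ} (hp : 1 ≤ p) (hpq : p ≤ q) :
    ∑ i ∈ Finset.Icc 1 (p - 1), f i + ∑ i ∈ Finset.Icc p q, f i = ∑ i ∈ Finset.Icc 1 q, f i := by
  have h1 : Finset.Icc 1 (p - 1) = Finset.Ioc 0 (p - 1) := Finset.Icc_add_one_left_eq_Ioc 0 (p - 1)
  have h2 : Finset.Icc p q = Finset.Ioc (p - 1) q := by
    rw [← Finset.Icc_add_one_left_eq_Ioc]; congr 1; omega
  have h3 : Finset.Icc 1 q = Finset.Ioc 0 q := Finset.Icc_add_one_left_eq_Ioc 0 q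
  rw [h1, h2, h3]
  exact Finset.sum_Ioc_consecutive f (by omega) (by omega)

lemma log_moranLen {c : ℕ → ℝ} (hc : ∀ k : ℕ, 1 ≤ k → 0 < c k) (k : ℕ) :
    Real.log (moranLen c k) = -lamSum c k := by
  unfold moranLen lamSum
  rw [Real.log_prod fun i hi => (hc i (Finset.mem_Icc.1 hi).1).ne', ← Finset.sum_neg_distrib]
  simp

lemma lamSum_term {c : ℕ → ℝ} (hc : ∀ k : ℕ, 1 ≤ k → 0 < c k)
    (hchalf : ∀ k : ℕ, 1 ≤ k → c k ≤ 1 / 2) {i : ℕ} (hi : 1 ≤ i) :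
    Real.log 2 ≤ -Real.log (c i) := by
  have := Real.log_le_log (hc i hi) (hchalf i hi)
  rw [show (1:ℝ)/2 = 2⁻¹ by norm_num, Real.log_inv] at this
  linarith

lemma lamSum_nonneg {c : ℕ → ℝ} (hc : ∀ k : ℕ, 1 ≤ k → 0 < c k)
    (hchalf : ∀ k : ℕ, 1 ≤ k → c k ≤ 1 / 2) (k : ℕ) : 0 ≤ lamSum c k :=
  Finset.sum_nonneg fun i hi => le_trans (Real.log_nonneg (by norm_num))
    (lamSum_term hc hchalf (Finset.mem_Icc.1 hi).1)

lemma lamSum_mono {c : ℕ → ℝ} (hc : ∀ k : ℕ, 1 ≤ k → 0 < c k)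
    (hchalf : ∀ k : ℕ, 1 ≤ k → c k ≤ 1 / 2) {k m : ℕ} (h : k ≤ m) :
    lamSum c k ≤ lamSum c m :=
  Finset.sum_le_sum_of_subset_of_nonneg (Finset.Icc_subset_Icc_right h)
    fun i hi _ => le_trans (Real.log_nonneg (by norm_num))
      (lamSum_term hc hchalf (Finset.mem_Icc.1 hi).1)

lemma lamSum_ge {c : ℕ → ℝ} (hc : ∀ k : ℕ, 1 ≤ k → 0 < c k)
    (hchalf : ∀ k : ℕ, 1 ≤ k → c k ≤ 1 / 2) (q : ℕ) :
    (q : ℝ) * Real.log 2 ≤ lamSum c q := by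
  have := Finset.card_nsmul_le_sum (Finset.Icc 1 q) (fun i => -Real.log (c i)) (Real.log 2)
    (fun i hi => lamSum_term hc hchalf (Finset.mem_Icc.1 hi).1)
  rwa [Nat.card_Icc, nsmul_eq_mul, Nat.add_sub_cancel] at this

lemma log_prod_Icc {c : ℕ → ℝ} (hc : ∀ k : ℕ, 1 ≤ k → 0 < c k) {p q : ℕ}
    (hp : 1 ≤ p) (hpq : p ≤ q) :
    Real.log (∏ i ∈ Finset.Icc p q, c i) = -(lamSum c q - lamSum c (p - 1)) := by
  rw [Real.log_prod fun i hi => (hc i (le_trans hp (Finset.mem_Icc.1 hi).1)).ne']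
  have := sum_split (fun i => -Real.log (c i)) hp hpq
  unfold lamSum at *
  have h2 : ∑ i ∈ Finset.Icc p q, Real.log (c i) = -∑ i ∈ Finset.Icc p q, (-Real.log (c i)) := by
    simp
  rw [h2]
  linarith

lemma moranLen_anti {c : ℕ → ℝ} (hc : ∀ k : ℕ, 1 ≤ k → 0 < c k)
    (hchalf : ∀ k : ℕ, 1 ≤ k → c k ≤ 1 / 2) {k m : ℕ} (h : k ≤ m) :
    moranLen c m ≤ moranLen c k := by
  rw [← Real.log_le_log_iff (moranLen_pos hc m) (moranLen_pos hc k),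
    log_moranLen hc, log_moranLen hc]
  linarith [lamSum_mono hc hchalf h]

lemma hFun_mem_inv_delta {A B : ℝ} {E : Set ℝ} (hEsub : E ⊆ Set.Icc A B)
    (hAB : A < B) {δ : ℝ} (hδ0 : 0 < δ) (hδ1 : δ < 1) :
    ∀ r R : ℝ, 0 < r → r < r ^ (1 - δ) → r ^ (1 - δ) ≤ R → R < 1 →
      (coverNum ↥E r R : ℝ) ≤ ((B - A) + 2) * (R / r) ^ (1 / δ) := by
  intro r R hr hrr hrR hRb
  have hr1 : r < 1 := by
    by_contra h
    push_neg at h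
    have := Real.rpow_le_rpow_of_exponent_le h (by linarith : 1 - δ ≤ 1)
    rw [Real.rpow_one] at this
    linarith
  have hd : 0 < B - A := by linarith
  have h1 : (coverNum ↥E r R : ℝ) ≤ (⌈(B - A) / r⌉₊ + 1 : ℕ) := by
    exact_mod_cast coverNum_le_bound hEsub hr R
  have h2 : ((⌈(B - A) / r⌉₊ + 1 : ℕ) : ℝ) ≤ (B - A) / r + 2 := by
    push_cast
    have := Nat.ceil_lt_add_one (show (0:ℝ) ≤ (B - A) / r from div_nonneg hd.le hr.le)
    linarith
  have h3 : (B - A) / r + 2 ≤ ((B - A) + 2) * (1 / r) := by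
    rw [show ((B - A) + 2) * (1 / r) = (B - A) / r + 2 / r by ring]
    have : 2 ≤ 2 / r := by
      rw [le_div_iff₀ hr]; linarith
    linarith
  have h4 : 1 / r ≤ (R / r) ^ (1 / δ) := by
    have hrneg : r ^ (-δ) = r ^ (1 - δ) / r := by
      rw [show -δ = (1 - δ) - 1 by ring, Real.rpow_sub hr, Real.rpow_one]
    have hRr : r ^ (-δ) ≤ R / r := by
      rw [hrneg]
      exact div_le_div_of_nonneg_right hrR hr.le
    have h5 : (r ^ (-δ)) ^ (1 / δ) ≤ (R / r) ^ (1 / δ) :=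
      Real.rpow_le_rpow (Real.rpow_nonneg hr.le _) hRr (by positivity)
    have h6 : (r ^ (-δ)) ^ (1 / δ) = 1 / r := by
      rw [← Real.rpow_mul hr.le, show -δ * (1 / δ) = -1 by field_simp, Real.rpow_neg_one,
        one_div]
    linarith
  calc (coverNum ↥E r R : ℝ) ≤ (B - A) / r + 2 := le_trans h1 h2
    _ ≤ ((B - A) + 2) * (1 / r) := h3
    _ ≤ ((B - A) + 2) * (R / r) ^ (1 / δ) := by
        apply mul_le_mul_of_nonneg_left h4 (by linarith)



lemma sum_split' (f : ℕ → ℝ) {p P q : ℕ} (hp : 1 ≤ p) (hpP : p ≤ P) (hPq : P ≤ q) :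
    ∑ i ∈ Finset.Icc p (P - 1), f i + ∑ i ∈ Finset.Icc P q, f i = ∑ i ∈ Finset.Icc p q, f i := by
  have h1 : Finset.Icc p (P - 1) = Finset.Ioc (p - 1) (P - 1) := by
    rw [← Finset.Icc_add_one_left_eq_Ioc]; congr 1; omega
  have h2 : Finset.Icc P q = Finset.Ioc (P - 1) q := by
    rw [← Finset.Icc_add_one_left_eq_Ioc]; congr 1; omega
  have h3 : Finset.Icc p q = Finset.Ioc (p - 1) q := by
    rw [← Finset.Icc_add_one_left_eq_Ioc]; congr 1; omega
  rw [h1, h2, h3]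
  exact Finset.sum_Ioc_consecutive f (by omega) (by omega)

lemma lognle {n : ℕ → ℕ} {c : ℕ → ℝ} (hn : ∀ k : ℕ, 1 ≤ k → 2 ≤ n k)
    (hc : ∀ k : ℕ, 1 ≤ k → 0 < c k ∧ c k ≤ 1 / (n k : ℝ)) {i : ℕ} (hi : 1 ≤ i) :
    Real.log (n i : ℝ) ≤ -Real.log (c i) := by
  have hni : (0:ℝ) < n i := by
    have := hn i hi; positivity
  have h1 : Real.log (c i) ≤ Real.log (1 / (n i : ℝ)) :=
    Real.log_le_log (hc i hi).1 (hc i hi).2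
  rw [one_div, Real.log_inv] at h1
  linarith

lemma logn_nonneg {n : ℕ → ℕ} (hn : ∀ k : ℕ, 1 ≤ k → 2 ≤ n k) {i : ℕ} (hi : 1 ≤ i) :
    0 ≤ Real.log (n i : ℝ) := by
  apply Real.log_nonneg
  have h2 : (2:ℝ) ≤ (n i : ℝ) := by exact_mod_cast hn i hi
  linarith

lemma spq_eval {n : ℕ → ℕ} {c : ℕ → ℝ} (hn : ∀ k : ℕ, 1 ≤ k → 2 ≤ n k)
    (hcpos : ∀ k : ℕ, 1 ≤ k → 0 < c k) {p q : ℕ} (hp : 1 ≤ p) (hpq : p ≤ q) :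
    spq n c p q = (∑ i ∈ Finset.Icc p q, Real.log (n i : ℝ))
      / (lamSum c q - lamSum c (p - 1)) := by
  unfold spq
  rw [Real.log_prod (fun i hi => by
      have := hn i (le_trans hp (Finset.mem_Icc.1 hi).1)
      positivity),
    log_prod_Icc hcpos hp hpq, neg_neg]

lemma isCobounded_helper {F : ℕ → ℝ} (h : ∀ᶠ q in Filter.atTop, 0 ≤ F q) :
    Filter.IsCoboundedUnder (· ≤ ·) Filter.atTop F :=
  Filter.IsBoundedUnder.isCoboundedUnder_le ⟨0, by
    rw [Filter.eventually_map]; exact h⟩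

theorem hFun_moran_ge (J : Set ℝ) (n : ℕ → ℕ) (c : ℕ → ℝ)
    (hn : ∀ k : ℕ, 1 ≤ k → 2 ≤ n k)
    (hc : ∀ k : ℕ, 1 ≤ k → 0 < c k ∧ c k ≤ 1 / (n k : ℝ))
    (hlim : Filter.Tendsto
      (fun k : ℕ => Real.log (c k) / Real.log (∏ i ∈ Finset.Icc 1 k, c i))
      Filter.atTop (𝓝 0))
    (E : Set ℝ) (hE : IsMoranSet J n c E) (δ : ℝ) (hδ : δ ∈ Set.Ioo (0 : ℝ) 1) :
    Filter.limsup (fun q : ℕ =>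
        sSup {s : ℝ | ∃ p : ℕ, 1 ≤ p ∧ p ≤ lIdx c δ q ∧ s = spq n c p q}) Filter.atTop
      ≤ hFun E δ := by
  obtain ⟨hδ0, hδ1⟩ := hδ
  obtain ⟨A, B, hAB, hJ, a, b, hA, hB, Hs', Hd', hEeq⟩ := hE
  have Hs : SubdivHyp n c a b := Hs'
  have Hd : DisjHyp n a b := Hd'
  have hcpos : ∀ k, 1 ≤ k → 0 < c k := fun k hk => (hc k hk).1
  have hchalf : ∀ k, 1 ≤ k → c k ≤ 1 / 2 := by
    intro k hk
    have h2 : (2:ℝ) ≤ (n k : ℝ) := by exact_mod_cast hn k hk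
    calc c k ≤ 1 / (n k : ℝ) := (hc k hk).2
      _ ≤ 1 / 2 := one_div_le_one_div_of_le (by norm_num) h2
  have hEsub : E ⊆ Set.Icc A B := E_subset_Icc hA hB hEeq
  have hD : 0 < B - A := by linarith
  have hlog2 : 0 < Real.log 2 := Real.log_pos (by norm_num)
  have hΛtop : Filter.Tendsto (fun q : ℕ => lamSum c q) Filter.atTop Filter.atTop :=
    tendsto_atTop_mono (fun q => lamSum_ge hcpos hchalf q)
      (Filter.Tendsto.atTop_mul_const hlog2 tendsto_natCast_atTop_atTop)
  have hΛpos : ∀ q : ℕ, 1 ≤ q → 0 < lamSum c q := by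
    intro q hq
    have h1 := lamSum_ge hcpos hchalf q
    have h2 : (1:ℝ) ≤ (q:ℝ) := by exact_mod_cast hq
    nlinarith
  have hΛnn := lamSum_nonneg hcpos hchalf
  -- facts about lIdx
  have hlfacts : ∀ q : ℕ, 1 ≤ q → (1 ≤ lIdx c δ q ∧ lIdx c δ q ≤ q ∧
      ∀ p, 1 ≤ p → p ≤ lIdx c δ q →
        δ * lamSum c q < lamSum c q - lamSum c (p - 1)) := by
    intro q hq
    set setL := {p : ℕ | 1 ≤ p ∧ p ≤ q ∧
      δ < Real.log (∏ i ∈ Finset.Icc p q, c i) /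
        Real.log (∏ i ∈ Finset.Icc 1 q, c i)} with hsetL
    have hΛq := hΛpos q hq
    have hlog1q : Real.log (∏ i ∈ Finset.Icc 1 q, c i) = -lamSum c q := by
      have := log_prod_Icc hcpos le_rfl hq
      simpa [lamSum] using this
    have h1mem : 1 ∈ setL := by
      refine ⟨le_rfl, hq, ?_⟩
      rw [div_self (by rw [hlog1q]; linarith)]
      linarith
    have hbddL : BddAbove setL := ⟨q, fun p hp => hp.2.1⟩
    have hlmem : lIdx c δ q ∈ setL := by
      have : lIdx c δ q = sSup setL := rfl
      rw [this]
      exact Nat.sSup_mem ⟨1, h1mem⟩ hbddL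
    have h1l : 1 ≤ lIdx c δ q := le_csSup hbddL h1mem
    refine ⟨h1l, hlmem.2.1, ?_⟩
    intro p hp hpl
    have hlq : lIdx c δ q ≤ q := hlmem.2.1
    have hratio := hlmem.2.2
    rw [log_prod_Icc hcpos h1l hlq, hlog1q, neg_div_neg_eq] at hratio
    have h5 := (lt_div_iff₀ hΛq).1 hratio
    have h6 : lamSum c (p - 1) ≤ lamSum c (lIdx c δ q - 1) :=
      lamSum_mono hcpos hchalf (by omega)
    linarith
  have hspq_nonneg : ∀ q p : ℕ, 1 ≤ p → p ≤ q → 0 ≤ spq n c p q := by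
    intro q p hp hpq
    rw [spq_eval hn hcpos hp hpq]
    refine div_nonneg (Finset.sum_nonneg fun i hi =>
      logn_nonneg hn (le_trans hp (Finset.mem_Icc.1 hi).1)) ?_
    linarith [lamSum_mono hcpos hchalf (show p - 1 ≤ q by omega)]
  have hFbdd : ∀ q : ℕ, BddAbove {s : ℝ | ∃ p : ℕ, 1 ≤ p ∧ p ≤ lIdx c δ q ∧
      s = spq n c p q} := by
    intro q
    have heq : {s : ℝ | ∃ p : ℕ, 1 ≤ p ∧ p ≤ lIdx c δ q ∧ s = spq n c p q}
        = (fun p => spq n c p q) '' Set.Icc 1 (lIdx c δ q) := by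
      ext s
      constructor
      · rintro ⟨p, hp1, hpl, rfl⟩; exact ⟨p, ⟨hp1, hpl⟩, rfl⟩
      · rintro ⟨p, ⟨hp1, hpl⟩, rfl⟩; exact ⟨p, hp1, hpl, rfl⟩
    rw [heq]
    exact ((Set.finite_Icc _ _).image _).bddAbove
  have hF0 : ∀ᶠ q in Filter.atTop, (0:ℝ) ≤
      sSup {s : ℝ | ∃ p : ℕ, 1 ≤ p ∧ p ≤ lIdx c δ q ∧ s = spq n c p q} := by
    filter_upwards [Filter.eventually_ge_atTop 1] with q hq
    obtain ⟨h1l, hlq, -⟩ := hlfacts q hq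
    exact le_trans (hspq_nonneg q 1 le_rfl hq)
      (le_csSup (hFbdd q) ⟨1, le_rfl, h1l, rfl⟩)
  have hcob := isCobounded_helper hF0
  -- the hFun set is nonempty
  have hSne : {α : ℝ | 0 ≤ α ∧ ∃ b c : ℝ, 0 < b ∧ 0 < c ∧ ∀ r R : ℝ,
      0 < r → r < r ^ (1 - δ) → r ^ (1 - δ) ≤ R → R < b →
        (coverNum ↥E r R : ℝ) ≤ c * (R / r) ^ α}.Nonempty :=
    ⟨1/δ, by positivity, 1, (B - A) + 2, one_pos, by linarith,
      hFun_mem_inv_delta hEsub hAB hδ0 hδ1⟩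
  rw [hFun]
  refine le_csInf hSne ?_
  rintro α ⟨hα0, bb, cc, hbb, hcc, hbound⟩
  refine le_of_forall_pos_le_add fun ε hε => ?_
  refine Filter.limsup_le_of_le hcob ?_
  -- choose k0
  obtain ⟨k0, hk0⟩ := (hΛtop.eventually_gt_atTop (Real.log (B - A) - Real.log bb)).exists
  have hDk0 : (B - A) * moranLen c k0 < bb := by
    have hpos : 0 < (B - A) * moranLen c k0 := mul_pos hD (moranLen_pos hcpos k0)
    rw [← Real.exp_log hpos, ← Real.exp_log hbb]
    apply Real.exp_lt_exp.2
    rw [Real.log_mul hD.ne' (moranLen_pos hcpos k0).ne', log_moranLen hcpos]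
    linarith
  set C := lamSum c k0 with hCdef
  set K := |Real.log (4 * cc)| + α * |Real.log (B - A)| + C with hKdef
  have hev : ∀ᶠ q in Filter.atTop, (k0 + 1 ≤ q ∧ Real.log (B - A) < lamSum c q ∧
      Real.log (B - A) - Real.log bb / (1 - δ) < lamSum c q ∧
      K / (δ * ε) < lamSum c q) :=
    (Filter.eventually_ge_atTop (k0 + 1)).and ((hΛtop.eventually_gt_atTop _).and
      ((hΛtop.eventually_gt_atTop _).and (hΛtop.eventually_gt_atTop _)))
  filter_upwards [hev] with q hq
  obtain ⟨hqk0, hE2, hE3, hE4⟩ := hq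
  have hq1 : 1 ≤ q := by omega
  obtain ⟨h1l, hlq, hkeyAll⟩ := hlfacts q hq1
  refine csSup_le ⟨spq n c 1 q, 1, le_rfl, h1l, rfl⟩ ?_
  rintro s ⟨p, hp1, hpl, rfl⟩
  -- main computation
  have hpq : p ≤ q := hpl.trans hlq
  have hkey := hkeyAll p hp1 hpl
  have hΛq := hΛpos q hq1
  set P := max p (k0 + 1) with hPdef
  have hP1 : 1 ≤ P := le_trans hp1 (le_max_left _ _)
  have hPq : P ≤ q := max_le hpq hqk0
  set r := (B - A) * moranLen c q with hrdef
  set R := max ((B - A) * moranLen c (P - 1)) (r ^ (1 - δ)) with hRdef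
  have hr0 : 0 < r := mul_pos hD (moranLen_pos hcpos q)
  have hlogr : Real.log r = Real.log (B - A) - lamSum c q := by
    rw [hrdef, Real.log_mul hD.ne' (moranLen_pos hcpos q).ne', log_moranLen hcpos]
    ring
  have hr1 : r < 1 := by
    rw [← Real.log_neg_iff hr0, hlogr]
    linarith
  have hrr : r < r ^ (1 - δ) := by
    have := Real.rpow_lt_rpow_of_exponent_gt hr0 hr1 (show 1 - δ < 1 by linarith)
    rwa [Real.rpow_one] at this
  have hrR : r ^ (1 - δ) ≤ R := le_max_right _ _
  have hRpos : 0 < R := lt_of_lt_of_le (Real.rpow_pos_of_pos hr0 _) hrR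
  have hRb : R < bb := by
    rw [hRdef]
    apply max_lt
    · calc (B - A) * moranLen c (P - 1)
          ≤ (B - A) * moranLen c k0 := by
            apply mul_le_mul_of_nonneg_left
              (moranLen_anti hcpos hchalf (by omega : k0 ≤ P - 1)) hD.le
        _ < bb := hDk0
    · have hpow : 0 < r ^ (1 - δ) := Real.rpow_pos_of_pos hr0 _
      rw [← Real.exp_log hpow, ← Real.exp_log hbb]
      apply Real.exp_lt_exp.2
      rw [Real.log_rpow hr0, hlogr]
      have h1δ : (0:ℝ) < 1 - δ := by linarith
      have he : Real.log (B - A) - lamSum c q < Real.log bb / (1 - δ) := by linarith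
      have he2 := mul_lt_mul_of_pos_left he h1δ
      have he3 : (1 - δ) * (Real.log bb / (1 - δ)) = Real.log bb := by field_simp
      linarith
  have hcn := hbound r R hr0 hrr hrR hRb
  have hcount := moran_count hn hcpos Hs Hd hA hB hAB hEeq hP1 hPq hrdef
    (le_max_left ((B - A) * moranLen c (P - 1)) (r ^ (1 - δ)))
  rw [← hRdef] at hcount
  -- logs
  have hprodpos : (0:ℝ) < ∏ i ∈ Finset.Icc P q, (n i : ℝ) := by
    apply Finset.prod_pos
    intro i hi
    have := hn i (le_trans hP1 (Finset.mem_Icc.1 hi).1)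
    positivity
  have hchain : (∏ i ∈ Finset.Icc P q, (n i : ℝ)) ≤ (4 * cc) * (R / r) ^ α := by
    have h1 : ((∏ i ∈ Finset.Icc P q, n i : ℕ) : ℝ) ≤ 4 * (coverNum ↥E r R : ℝ) := by
      exact_mod_cast hcount
    rw [Nat.cast_prod] at h1
    calc (∏ i ∈ Finset.Icc P q, (n i : ℝ)) ≤ 4 * (coverNum ↥E r R : ℝ) := h1
      _ ≤ 4 * (cc * (R / r) ^ α) := by linarith
      _ = (4 * cc) * (R / r) ^ α := by ring
  have hRr_pos : 0 < R / r := div_pos hRpos hr0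
  have hlogM : ∑ i ∈ Finset.Icc P q, Real.log (n i : ℝ)
      ≤ Real.log (4 * cc) + α * Real.log (R / r) := by
    have h2 := Real.log_le_log hprodpos hchain
    rw [Real.log_prod (fun i hi => by
        have := hn i (le_trans hP1 (Finset.mem_Icc.1 hi).1); positivity)] at h2
    rwa [Real.log_mul (by positivity) (by positivity), Real.log_rpow hRr_pos] at h2
  have hΛmono_pp : lamSum c (p - 1) ≤ lamSum c (P - 1) :=
    lamSum_mono hcpos hchalf (by omega)
  have hlogRr : Real.log (R / r) ≤ (lamSum c q - lamSum c (p - 1))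
      + |Real.log (B - A)| := by
    rw [Real.log_div hRpos.ne' hr0.ne']
    have habs := abs_nonneg (Real.log (B - A))
    rcases max_choice ((B - A) * moranLen c (P - 1)) (r ^ (1 - δ)) with hRe | hRe
    · rw [hRdef, hRe, Real.log_mul hD.ne' (moranLen_pos hcpos _).ne',
        log_moranLen hcpos, hlogr]
      linarith
    · rw [hRdef, hRe, Real.log_rpow hr0, hlogr]
      have hm1 : δ * (-Real.log (B - A)) ≤ δ * |Real.log (B - A)| :=
        mul_le_mul_of_nonneg_left (neg_le_abs _) hδ0.le
      have hm2 : 0 ≤ (1 - δ) * |Real.log (B - A)| := mul_nonneg (by linarith) habs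
      linarith [hkey, hm1, hm2]
  -- split sum
  have hsplitN : ∑ i ∈ Finset.Icc p (P - 1), Real.log (n i : ℝ)
      + ∑ i ∈ Finset.Icc P q, Real.log (n i : ℝ)
      = ∑ i ∈ Finset.Icc p q, Real.log (n i : ℝ) :=
    sum_split' _ hp1 (le_max_left _ _) hPq
  have hmid : ∑ i ∈ Finset.Icc p (P - 1), Real.log (n i : ℝ) ≤ C := by
    rcases le_or_gt p (P - 1) with hpP1 | hpP1
    · have hPk : P - 1 = k0 := by
        rcases max_choice p (k0 + 1) with hPe | hPe <;> omega
      rw [hPk] at hpP1 ⊢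
      have hterm : ∑ i ∈ Finset.Icc p k0, Real.log (n i : ℝ)
          ≤ ∑ i ∈ Finset.Icc p k0, (-Real.log (c i)) :=
        Finset.sum_le_sum fun i hi => lognle hn hc (le_trans hp1 (Finset.mem_Icc.1 hi).1)
      have hsp := sum_split (fun i => -Real.log (c i)) hp1 hpP1
      have hnn := hΛnn (p - 1)
      rw [hCdef]
      simp only [lamSum] at hsp hnn ⊢
      linarith
    · rw [show Finset.Icc p (P - 1) = ∅ from Finset.Icc_eq_empty (by omega)]
      rw [hCdef]
      simpa using hΛnn k0
  -- final assembly
  have hdd0 : 0 < lamSum c q - lamSum c (p - 1) := lt_trans (mul_pos hδ0 hΛq) hkey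
  rw [spq_eval hn hcpos hp1 hpq, div_le_iff₀ hdd0]
  have t1 : α * Real.log (R / r)
      ≤ α * ((lamSum c q - lamSum c (p - 1)) + |Real.log (B - A)|) :=
    mul_le_mul_of_nonneg_left hlogRr hα0
  have t2 : K < ε * (δ * lamSum c q) := by
    have h7 := (div_lt_iff₀ (by positivity : (0:ℝ) < δ * ε)).1 hE4
    linarith [h7]
  have t3 : ε * (δ * lamSum c q) ≤ ε * (lamSum c q - lamSum c (p - 1)) :=
    mul_le_mul_of_nonneg_left hkey.le hε.le
  have t4 : Real.log (4 * cc) ≤ |Real.log (4 * cc)| := le_abs_self _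
  rw [hKdef] at t2
  linarith [hsplitN, hmid, hlogM, t1, t2, t3, t4]
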